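/- If A(y) = wy + λy² with w ∈ (1,2), λ = 2-w, then there is a unique formal power series g(y) = y + Σ_{k≥2} g_k y^k satisfying g(wy) = A(g(y)); its coefficients satisfy g_2 = λ/((w-1)w) and all g_k are nonnegative. -/

import Mathlib

open PowerSeries

noncomputable def pcCoeff (w lam : ℝ) : ℕ → ℝ
  | 0 => 0
  | 1 => 1
  | (n+2) => lam / (w^(n+2) - w) *
      ∑ j ∈ (Finset.range (n+1)).attach, pcCoeff w lam (j.1+1) * pcCoeff w lam (n+1-j.1)
termination_by n => n
decreasing_by
  · have := Finset.mem_range.mp j.2; omega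
  · omega

lemma pcCoeff_succ_succ (w lam : ℝ) (n : ℕ) :
    pcCoeff w lam (n+2) = lam / (w^(n+2) - w) *
      ∑ j ∈ Finset.range (n+1), pcCoeff w lam (j+1) * pcCoeff w lam (n+1-j) := by
  rw [pcCoeff, ← Finset.sum_attach (Finset.range (n+1))
    (fun j => pcCoeff w lam (j+1) * pcCoeff w lam (n+1-j))]

lemma pc_coeff_sq (h : PowerSeries ℝ) (h0 : coeff 0 h = 0) (m : ℕ) :
    coeff (m+2) (h^2) =
      ∑ j ∈ Finset.range (m+1), coeff (j+1) h * coeff (m+1-j) h := by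
  rw [pow_two, PowerSeries.coeff_mul, Finset.Nat.sum_antidiagonal_eq_sum_range_succ_mk]
  rw [Finset.sum_range_succ', Finset.sum_range_succ]
  simp only [h0, zero_mul, mul_zero, Nat.sub_self, add_zero]
  · have : ∀ j ∈ Finset.range (m+1),
        coeff (j+1) h * coeff (m+2-(j+1)) h
          = coeff (j+1) h * coeff (m+1-j) h := by
      intro j hj
      have e : m+2-(j+1) = m+1-j := by omega
      rw [e]
    rw [Finset.sum_congr rfl this]

lemma pc_pow_sub_pos (w : ℝ) (hw1 : 1 < w) (m : ℕ) : 0 < w^(m+2) - w := by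
  have h1 : (1:ℝ) < w^(m+1) := one_lt_pow₀ hw1 (Nat.succ_ne_zero m)
  have hw0 : 0 < w := lt_trans one_pos hw1
  have h3 : w^(m+2) = w * w^(m+1) := by ring
  nlinarith

lemma pc_nonneg (w lam : ℝ) (hw1 : 1 < w) (hlam : 0 ≤ lam) (n : ℕ) :
    0 ≤ pcCoeff w lam n := by
  induction n using Nat.strong_induction_on with
  | _ n ih =>
    match n with
    | 0 => simp [pcCoeff]
    | 1 => simp [pcCoeff]
    | (m+2) =>
      rw [pcCoeff_succ_succ]
      apply mul_nonneg
      · exact div_nonneg hlam (le_of_lt (pc_pow_sub_pos w hw1 m))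
      · apply Finset.sum_nonneg
        intro j hj
        have hj' := Finset.mem_range.mp hj
        exact mul_nonneg (ih (j+1) (by omega)) (ih (m+1-j) (by omega))

theorem poincare_power_series_unique
    (w lam : ℝ)
    (hw1 : 1 < w) (hw2 : w < 2)
    (hlam : lam = 2 - w) :
    (∃! g : PowerSeries ℝ,
      coeff 0 g = 0 ∧ coeff 1 g = 1 ∧
      rescale w g = C w * g + C lam * g ^ 2) ∧
    (∀ g : PowerSeries ℝ,
      coeff 0 g = 0 → coeff 1 g = 1 →
      rescale w g = C w * g + C lam * g ^ 2 →
      coeff 2 g = lam / ((w - 1) * w) ∧ ∀ k : ℕ, 0 ≤ coeff k g) := by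
  have hlam' : 0 ≤ lam := by rw [hlam]; linarith
  set G : PowerSeries ℝ := PowerSeries.mk (pcCoeff w lam) with hG
  have hG0 : coeff 0 G = 0 := by simp [hG, pcCoeff]
  have hG1 : coeff 1 G = 1 := by simp [hG, pcCoeff]
  -- G satisfies the functional equation
  have hGeq : rescale w G = C w * G + C lam * G ^ 2 := by
    ext n
    rw [coeff_rescale, map_add, coeff_C_mul, coeff_C_mul]
    match n with
    | 0 => simp [hG0, pow_two, PowerSeries.coeff_mul]
    | 1 =>
      have : coeff 1 (G^2) = 0 := by
        rw [pow_two, PowerSeries.coeff_mul]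
        simp [Finset.Nat.antidiagonal_succ, hG0]
      rw [this, hG1]; ring
    | (m+2) =>
      rw [pc_coeff_sq G hG0 m]
      have hc : ∀ k, coeff k G = pcCoeff w lam k := fun k => coeff_mk k _
      simp only [hc]
      have hne := ne_of_gt (pc_pow_sub_pos w hw1 m)
      rw [pcCoeff_succ_succ]
      field_simp
      ring
  -- uniqueness: any solution equals G
  have huniq : ∀ g : PowerSeries ℝ,
      coeff 0 g = 0 → coeff 1 g = 1 →
      rescale w g = C w * g + C lam * g ^ 2 → g = G := by
    intro g h0 h1 heq
    ext n
    rw [coeff_mk]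
    induction n using Nat.strong_induction_on with
    | _ n ih =>
      match n with
      | 0 => simpa [pcCoeff] using h0
      | 1 => simpa [pcCoeff] using h1
      | (m+2) =>
        have hcoeff := congrArg (coeff (m+2)) heq
        rw [coeff_rescale, map_add, coeff_C_mul, coeff_C_mul, pc_coeff_sq g h0 m] at hcoeff
        have hsum : ∑ j ∈ Finset.range (m+1), coeff (j+1) g * coeff (m+1-j) g
            = ∑ j ∈ Finset.range (m+1), pcCoeff w lam (j+1) * pcCoeff w lam (m+1-j) := by
          apply Finset.sum_congr rfl
          intro j hj
          have hj' := Finset.mem_range.mp hj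
          rw [ih (j+1) (by omega), ih (m+1-j) (by omega)]
        rw [hsum] at hcoeff
        have hpos := pc_pow_sub_pos w hw1 m
        have hne := ne_of_gt hpos
        rw [pcCoeff_succ_succ]
        field_simp
        nlinarith [hcoeff]
  constructor
  · exact ⟨G, ⟨hG0, hG1, hGeq⟩, fun g ⟨h0, h1, heq⟩ => huniq g h0 h1 heq⟩
  · intro g h0 h1 heq
    have hg : g = G := huniq g h0 h1 heq
    subst hg
    constructor
    · have : coeff 2 G = pcCoeff w lam 2 := coeff_mk 2 _
      rw [this]
      show pcCoeff w lam (0+2) = lam / ((w-1)*w)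
      rw [pcCoeff_succ_succ]
      simp [pcCoeff]
      congr 1
      ring
    · intro k
      rw [coeff_mk]
      exact pc_nonneg w lam hw1 hlam' k
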